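/- For every integer n ≥ 0 with n ≡ 0 (mod 3), the octonion product satisfies 49·(jO_n · JO_n) = (99 − 520·2^n − 349488·4^n)·e_0 + (2^{2n+6} − 7842·2^n + 36)·e_1 + (2^{2n+7} + 374·2^n − 12)·e_2 + (2^{2n+8} − 4936·2^n − 24)·e_3 + (2^{2n+9} − 3390·2^n + 36)·e_4 + (2^{2n+10} − 1110·2^n − 12)·e_5 + (2^{2n+11} − 5944·2^n − 24)·e_6 + (2^{2n+12} + 3414·2^n + 36)·e_7. -/

import Mathlib

open Quaternion

noncomputable section

/-- The octonions, built from pairs of quaternions via the Cayley–Dickson construction. -/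
def Octonion : Type := ℍ[ℝ] × ℍ[ℝ]

namespace Octonion

instance : AddCommGroup Octonion := inferInstanceAs (AddCommGroup (ℍ[ℝ] × ℍ[ℝ]))
instance : Module ℝ Octonion := inferInstanceAs (Module ℝ (ℍ[ℝ] × ℍ[ℝ]))

instance : One Octonion := ⟨((1, 0) : ℍ[ℝ] × ℍ[ℝ])⟩

/-- Cayley–Dickson multiplication `(a,b)·(c,d) = (ac - d̄b, da + bc̄)`; this realizes the
standard octonion multiplication table (`e₁e₂ = e₃`, `e₁e₄ = e₅`, `e₂e₄ = e₆`,
`e₃e₄ = e₇`, `eₛ² = -1` for `1 ≤ s ≤ 7`, …). -/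
instance : Mul Octonion :=
  ⟨fun p q =>
    ((p : ℍ[ℝ] × ℍ[ℝ]).1 * (q : ℍ[ℝ] × ℍ[ℝ]).1
        - star (q : ℍ[ℝ] × ℍ[ℝ]).2 * (p : ℍ[ℝ] × ℍ[ℝ]).2,
      (q : ℍ[ℝ] × ℍ[ℝ]).2 * (p : ℍ[ℝ] × ℍ[ℝ]).1
        + (p : ℍ[ℝ] × ℍ[ℝ]).2 * star (q : ℍ[ℝ] × ℍ[ℝ]).1)⟩

/-- The standard basis `e₀ = 1, e₁, …, e₇` of the octonions. -/
def e : Fin 8 → Octonion :=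
  ![((1, 0) : ℍ[ℝ] × ℍ[ℝ]),
    ((⟨0, 1, 0, 0⟩, 0) : ℍ[ℝ] × ℍ[ℝ]),
    ((⟨0, 0, 1, 0⟩, 0) : ℍ[ℝ] × ℍ[ℝ]),
    ((⟨0, 0, 0, 1⟩, 0) : ℍ[ℝ] × ℍ[ℝ]),
    ((0, 1) : ℍ[ℝ] × ℍ[ℝ]),
    ((0, ⟨0, 1, 0, 0⟩) : ℍ[ℝ] × ℍ[ℝ]),
    ((0, ⟨0, 0, 1, 0⟩) : ℍ[ℝ] × ℍ[ℝ]),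
    ((0, ⟨0, 0, 0, 1⟩) : ℍ[ℝ] × ℍ[ℝ])]

end Octonion

/-- The third order Jacobsthal numbers: `J₀ = 0`, `J₁ = 1`, `J₂ = 1`,
`J_{n+3} = J_{n+2} + J_{n+1} + 2·J_n`. -/
def J3 : ℕ → ℕ
  | 0 => 0
  | 1 => 1
  | 2 => 1
  | n + 3 => J3 (n + 2) + J3 (n + 1) + 2 * J3 n

/-- The third order Jacobsthal–Lucas numbers: `j₀ = 2`, `j₁ = 1`, `j₂ = 5`,
`j_{n+3} = j_{n+2} + j_{n+1} + 2·j_n`. -/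
def j3 : ℕ → ℕ
  | 0 => 2
  | 1 => 1
  | 2 => 5
  | n + 3 => j3 (n + 2) + j3 (n + 1) + 2 * j3 n

/-- The `n`-th third order Jacobsthal octonion `JO_n = ∑_{s=0}^{7} J_{n+s} e_s`. -/
def JO (n : ℕ) : Octonion :=
  ∑ s : Fin 8, (J3 (n + (s : ℕ)) : ℝ) • Octonion.e s

/-- The `n`-th third order Jacobsthal–Lucas octonion `jO_n = ∑_{s=0}^{7} j_{n+s} e_s`. -/
def jO (n : ℕ) : Octonion :=
  ∑ s : Fin 8, (j3 (n + (s : ℕ)) : ℝ) • Octonion.e s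


lemma Octonion.osmul (r : ℝ) (p : Octonion) :
    r • p = ((r • (p : ℍ[ℝ] × ℍ[ℝ]).1, r • (p : ℍ[ℝ] × ℍ[ℝ]).2) : ℍ[ℝ] × ℍ[ℝ]) := rfl

lemma Octonion.oadd (p q : Octonion) :
    p + q = (((p : ℍ[ℝ] × ℍ[ℝ]).1 + (q : ℍ[ℝ] × ℍ[ℝ]).1,
              (p : ℍ[ℝ] × ℍ[ℝ]).2 + (q : ℍ[ℝ] × ℍ[ℝ]).2) : ℍ[ℝ] × ℍ[ℝ]) := rfl

lemma Octonion.mul_form (a b : Octonion) :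
    a * b
      = (((a : ℍ[ℝ] × ℍ[ℝ]).1 * (b : ℍ[ℝ] × ℍ[ℝ]).1
            - star (b : ℍ[ℝ] × ℍ[ℝ]).2 * (a : ℍ[ℝ] × ℍ[ℝ]).2,
          (b : ℍ[ℝ] × ℍ[ℝ]).2 * (a : ℍ[ℝ] × ℍ[ℝ]).1
            + (a : ℍ[ℝ] × ℍ[ℝ]).2 * star (b : ℍ[ℝ] × ℍ[ℝ]).1) : ℍ[ℝ] × ℍ[ℝ]) := rfl

lemma Octonion.e0' : Octonion.e 0 = ((⟨1,0,0,0⟩, ⟨0,0,0,0⟩) : ℍ[ℝ] × ℍ[ℝ]) := rfl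
lemma Octonion.e1' : Octonion.e 1 = ((⟨0,1,0,0⟩, ⟨0,0,0,0⟩) : ℍ[ℝ] × ℍ[ℝ]) := rfl
lemma Octonion.e2' : Octonion.e 2 = ((⟨0,0,1,0⟩, ⟨0,0,0,0⟩) : ℍ[ℝ] × ℍ[ℝ]) := rfl
lemma Octonion.e3' : Octonion.e 3 = ((⟨0,0,0,1⟩, ⟨0,0,0,0⟩) : ℍ[ℝ] × ℍ[ℝ]) := rfl
lemma Octonion.e4' : Octonion.e 4 = ((⟨0,0,0,0⟩, ⟨1,0,0,0⟩) : ℍ[ℝ] × ℍ[ℝ]) := rfl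
lemma Octonion.e5' : Octonion.e 5 = ((⟨0,0,0,0⟩, ⟨0,1,0,0⟩) : ℍ[ℝ] × ℍ[ℝ]) := rfl
lemma Octonion.e6' : Octonion.e 6 = ((⟨0,0,0,0⟩, ⟨0,0,1,0⟩) : ℍ[ℝ] × ℍ[ℝ]) := rfl
lemma Octonion.e7' : Octonion.e 7 = ((⟨0,0,0,0⟩, ⟨0,0,0,1⟩) : ℍ[ℝ] × ℍ[ℝ]) := rfl

open Octonion in
lemma Octonion.sum_form (c : Fin 8 → ℝ) :
    ∑ s : Fin 8, c s • Octonion.e s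
      = ((⟨c 0, c 1, c 2, c 3⟩, ⟨c 4, c 5, c 6, c 7⟩) : ℍ[ℝ] × ℍ[ℝ]) := by
  rw [Fin.sum_univ_eight]
  have h1 : ∀ p q : Octonion, (p + q : Octonion).1 = (p : ℍ[ℝ] × ℍ[ℝ]).1 + (q : ℍ[ℝ] × ℍ[ℝ]).1 := fun _ _ => rfl
  have h2 : ∀ p q : Octonion, (p + q : Octonion).2 = (p : ℍ[ℝ] × ℍ[ℝ]).2 + (q : ℍ[ℝ] × ℍ[ℝ]).2 := fun _ _ => rfl
  have h3 : ∀ (r : ℝ) (p : Octonion), (r • p : Octonion).1 = r • (p : ℍ[ℝ] × ℍ[ℝ]).1 := fun _ _ => rfl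
  have h4 : ∀ (r : ℝ) (p : Octonion), (r • p : Octonion).2 = r • (p : ℍ[ℝ] × ℍ[ℝ]).2 := fun _ _ => rfl
  refine Prod.ext ?_ ?_ <;> ext <;> simp only [h1, h2, h3, h4, Quaternion.re_add, Quaternion.imI_add, Quaternion.imJ_add, Quaternion.imK_add, Quaternion.re_smul, Quaternion.imI_smul, Quaternion.imJ_smul, Quaternion.imK_smul] <;> simp [Octonion.e]

lemma closed (k : ℕ) :
    7 * J3 (3*k) + 2 = 2^(3*k+1) ∧ 7 * J3 (3*k+1) = 2^(3*k+2) + 3 ∧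
    7 * J3 (3*k+2) + 1 = 2^(3*k+3) ∧ 7 * j3 (3*k) = 2^(3*k+3) + 6 ∧
    7 * j3 (3*k+1) + 9 = 2^(3*k+4) ∧ 7 * j3 (3*k+2) = 2^(3*k+5) + 3 := by
  induction k with
  | zero => decide
  | succ k ih =>
    obtain ⟨h1, h2, h3, h4, h5, h6⟩ := ih
    have e3 : 3 * (k+1) = 3*k + 3 := by ring
    rw [e3]
    simp only [show 3*k+3+1 = 3*k+4 by ring, show 3*k+3+2 = 3*k+5 by ring]
    have r1 : J3 (3*k+3) = J3 (3*k+2) + J3 (3*k+1) + 2 * J3 (3*k) := rfl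
    have r2 : J3 (3*k+4) = J3 (3*k+3) + J3 (3*k+2) + 2 * J3 (3*k+1) := rfl
    have r3 : J3 (3*k+5) = J3 (3*k+4) + J3 (3*k+3) + 2 * J3 (3*k+2) := rfl
    have s1 : j3 (3*k+3) = j3 (3*k+2) + j3 (3*k+1) + 2 * j3 (3*k) := rfl
    have s2 : j3 (3*k+4) = j3 (3*k+3) + j3 (3*k+2) + 2 * j3 (3*k+1) := rfl
    have s3 : j3 (3*k+5) = j3 (3*k+4) + j3 (3*k+3) + 2 * j3 (3*k+2) := rfl
    have p2 : (2:ℕ)^(3*k+2) = 2*2^(3*k+1) := by ring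
    have p3 : (2:ℕ)^(3*k+3) = 4*2^(3*k+1) := by ring
    have p4 : (2:ℕ)^(3*k+4) = 8*2^(3*k+1) := by ring
    have p5 : (2:ℕ)^(3*k+5) = 16*2^(3*k+1) := by ring
    have p6 : (2:ℕ)^(3*k+3+1) = 8*2^(3*k+1) := by ring
    have p7 : (2:ℕ)^(3*k+3+2) = 16*2^(3*k+1) := by ring
    have p8 : (2:ℕ)^(3*k+3+3) = 32*2^(3*k+1) := by ring
    have p9 : (2:ℕ)^(3*k+3+4) = 64*2^(3*k+1) := by ring
    have p10 : (2:ℕ)^(3*k+3+5) = 128*2^(3*k+1) := by ring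
    omega

lemma JO_eq (m : ℕ) : JO m =
    (((⟨J3 m, J3 (m+1), J3 (m+2), J3 (m+3)⟩ : ℍ[ℝ]),
      (⟨J3 (m+4), J3 (m+5), J3 (m+6), J3 (m+7)⟩ : ℍ[ℝ])) : ℍ[ℝ] × ℍ[ℝ]) := by
  rw [JO, Octonion.sum_form]
  rfl

lemma jO_eq (m : ℕ) : jO m =
    (((⟨j3 m, j3 (m+1), j3 (m+2), j3 (m+3)⟩ : ℍ[ℝ]),
      (⟨j3 (m+4), j3 (m+5), j3 (m+6), j3 (m+7)⟩ : ℍ[ℝ])) : ℍ[ℝ] × ℍ[ℝ]) := by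
  rw [jO, Octonion.sum_form]
  rfl


lemma qmul (a b c d e f g h : ℝ) :
    (⟨a,b,c,d⟩ * ⟨e,f,g,h⟩ : ℍ[ℝ])
      = ⟨a*e-b*f-c*g-d*h, a*f+b*e+c*h-d*g, a*g-b*h+c*e+d*f, a*h+b*g-c*f+d*e⟩ := by
  ext
  · erw [Quaternion.re_mul]
  · erw [Quaternion.imI_mul]
  · erw [Quaternion.imJ_mul]
  · erw [Quaternion.imK_mul]
lemma qsmul (r a b c d : ℝ) : r • (⟨a,b,c,d⟩ : ℍ[ℝ]) = ⟨r*a,r*b,r*c,r*d⟩ := by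
  ext <;> simp
lemma qstar (a b c d : ℝ) : star (⟨a,b,c,d⟩ : ℍ[ℝ]) = ⟨a,-b,-c,-d⟩ := by
  ext <;> simp
lemma qsub (a b c d e f g h : ℝ) : (⟨a,b,c,d⟩ : ℍ[ℝ]) - ⟨e,f,g,h⟩ = ⟨a-e,b-f,c-g,d-h⟩ := by
  ext <;> simp
lemma qadd (a b c d e f g h : ℝ) : (⟨a,b,c,d⟩ : ℍ[ℝ]) + ⟨e,f,g,h⟩ = ⟨a+e,b+f,c+g,d+h⟩ := by
  ext <;> simp

set_option maxHeartbeats 800000 in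
lemma omul_mk {a b : Octonion} {a0 a1 a2 a3 a4 a5 a6 a7 b0 b1 b2 b3 b4 b5 b6 b7 : ℝ}
    (ha : a = (((⟨a0,a1,a2,a3⟩ : ℍ[ℝ]), (⟨a4,a5,a6,a7⟩ : ℍ[ℝ])) : ℍ[ℝ] × ℍ[ℝ]))
    (hb : b = (((⟨b0,b1,b2,b3⟩ : ℍ[ℝ]), (⟨b4,b5,b6,b7⟩ : ℍ[ℝ])) : ℍ[ℝ] × ℍ[ℝ])) :
    a * b = (((⟨a0*b0 - a1*b1 - a2*b2 - a3*b3 - a4*b4 - a5*b5 - a6*b6 - a7*b7, a0*b1 + a1*b0 + a2*b3 - a3*b2 + a4*b5 - a5*b4 - a6*b7 + a7*b6, a0*b2 - a1*b3 + a2*b0 + a3*b1 + a4*b6 + a5*b7 - a6*b4 - a7*b5, a0*b3 + a1*b2 - a2*b1 + a3*b0 + a4*b7 - a5*b6 + a6*b5 - a7*b4⟩ : ℍ[ℝ]),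
          (⟨a0*b4 - a1*b5 - a2*b6 - a3*b7 + a4*b0 + a5*b1 + a6*b2 + a7*b3, a0*b5 + a1*b4 - a2*b7 + a3*b6 - a4*b1 + a5*b0 - a6*b3 + a7*b2, a0*b6 + a1*b7 + a2*b4 - a3*b5 - a4*b2 + a5*b3 + a6*b0 - a7*b1, a0*b7 - a1*b6 + a2*b5 + a3*b4 - a4*b3 - a5*b2 + a6*b1 + a7*b0⟩ : ℍ[ℝ])) : ℍ[ℝ] × ℍ[ℝ]) := by
  rw [Octonion.mul_form]
  refine Prod.ext ?_ ?_ <;> ext <;>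
    simp only [Quaternion.re_sub, Quaternion.imI_sub, Quaternion.imJ_sub, Quaternion.imK_sub,
      Quaternion.re_add, Quaternion.imI_add, Quaternion.imJ_add, Quaternion.imK_add,
      Quaternion.re_mul, Quaternion.imI_mul, Quaternion.imJ_mul, Quaternion.imK_mul,
      Quaternion.re_star, Quaternion.imI_star, Quaternion.imJ_star, Quaternion.imK_star] <;>
    subst ha hb <;> dsimp only <;>
    ring

lemma osmul_mk {p : Octonion} {c0 c1 c2 c3 c4 c5 c6 c7 : ℝ} (r : ℝ)
    (hp : p = (((⟨c0,c1,c2,c3⟩ : ℍ[ℝ]), (⟨c4,c5,c6,c7⟩ : ℍ[ℝ])) : ℍ[ℝ] × ℍ[ℝ])) :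
    r • p = (((⟨r*c0,r*c1,r*c2,r*c3⟩ : ℍ[ℝ]), (⟨r*c4,r*c5,r*c6,r*c7⟩ : ℍ[ℝ])) : ℍ[ℝ] × ℍ[ℝ]) := by
  subst hp
  erw [Octonion.osmul]
  refine Prod.ext ?_ ?_ <;> ext <;> rfl

open Octonion in
lemma rhs_form (c0 c1 c2 c3 c4 c5 c6 c7 : ℝ) :
    c0 • e 0 + c1 • e 1 + c2 • e 2 + c3 • e 3 + c4 • e 4 + c5 • e 5 + c6 • e 6 + c7 • e 7
      = ((⟨c0, c1, c2, c3⟩, ⟨c4, c5, c6, c7⟩) : ℍ[ℝ] × ℍ[ℝ]) := by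
  have h1 : ∀ p q : Octonion, (p + q : Octonion).1 = (p : ℍ[ℝ] × ℍ[ℝ]).1 + (q : ℍ[ℝ] × ℍ[ℝ]).1 := fun _ _ => rfl
  have h2 : ∀ p q : Octonion, (p + q : Octonion).2 = (p : ℍ[ℝ] × ℍ[ℝ]).2 + (q : ℍ[ℝ] × ℍ[ℝ]).2 := fun _ _ => rfl
  have h3 : ∀ (r : ℝ) (p : Octonion), (r • p : Octonion).1 = r • (p : ℍ[ℝ] × ℍ[ℝ]).1 := fun _ _ => rfl
  have h4 : ∀ (r : ℝ) (p : Octonion), (r • p : Octonion).2 = r • (p : ℍ[ℝ] × ℍ[ℝ]).2 := fun _ _ => rfl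
  refine Prod.ext ?_ ?_ <;> ext <;> simp only [h1, h2, h3, h4, Quaternion.re_add, Quaternion.imI_add, Quaternion.imJ_add, Quaternion.imK_add, Quaternion.re_smul, Quaternion.imI_smul, Quaternion.imJ_smul, Quaternion.imK_smul] <;> simp [Octonion.e]

set_option maxHeartbeats 1600000 in
open Octonion in
lemma jO_mul_JO_aux (k : ℕ) :
    (49 : ℝ) • (jO (3*k) * JO (3*k)) =
      ((99 : ℝ) - 520 * 2 ^ (3*k) - 349488 * 4 ^ (3*k)) • e 0
      + ((2 : ℝ) ^ (2 * (3*k) + 6) - 7842 * 2 ^ (3*k) + 36) • e 1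
      + ((2 : ℝ) ^ (2 * (3*k) + 7) + 374 * 2 ^ (3*k) - 12) • e 2
      + ((2 : ℝ) ^ (2 * (3*k) + 8) - 4936 * 2 ^ (3*k) - 24) • e 3
      + ((2 : ℝ) ^ (2 * (3*k) + 9) - 3390 * 2 ^ (3*k) + 36) • e 4
      + ((2 : ℝ) ^ (2 * (3*k) + 10) - 1110 * 2 ^ (3*k) - 12) • e 5
      + ((2 : ℝ) ^ (2 * (3*k) + 11) - 5944 * 2 ^ (3*k) - 24) • e 6
      + ((2 : ℝ) ^ (2 * (3*k) + 12) + 3414 * 2 ^ (3*k) + 36) • e 7 := by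
  set x : ℝ := 2 ^ (3 * k) with hx
  obtain ⟨a1, a2, a3, b1, b2, b3⟩ := closed k
  obtain ⟨a4, a5, a6, b4, b5, b6⟩ := closed (k+1)
  obtain ⟨a7, a8, -, b7, b8, -⟩ := closed (k+2)
  simp only [show 3*(k+1) = 3*k+3 by ring, show 3*(k+2) = 3*k+6 by ring,
    show 3*k+3+1 = 3*k+4 by ring, show 3*k+3+2 = 3*k+5 by ring,
    show 3*k+3+3 = 3*k+6 by ring, show 3*k+3+4 = 3*k+7 by ring,
    show 3*k+3+5 = 3*k+8 by ring, show 3*k+6+1 = 3*k+7 by ring,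
    show 3*k+6+2 = 3*k+8 by ring, show 3*k+6+3 = 3*k+9 by ring,
    show 3*k+6+4 = 3*k+10 by ring, show 3*k+6+5 = 3*k+11 by ring]
    at a4 a5 a6 b4 b5 b6 a7 a8 b7 b8
  have pw : ∀ m : ℕ, (2:ℝ)^(3*k+m) = 2^m * x := by
    intro m; rw [hx, ← pow_add]; ring_nf
  have r4 : (4:ℝ)^(3*k) = x * x := by
    rw [show (4:ℝ) = 2*2 by norm_num, mul_pow, hx]
  have rbig : ∀ m : ℕ, (2:ℝ)^(2*(3*k)+m) = 2^m * (x * x) := by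
    intro m
    rw [show 2*(3*k)+m = 3*k+(3*k+m) by ring, pow_add, pw m, hx]; ring
  have hJ0 : (J3 (3*k) : ℝ) = (2*x + (-2))/7 := by
    have hc : (7:ℝ) * (J3 (3*k) : ℝ) + 2 = 2^(3*k+1) := by exact_mod_cast a1
    rw [pw 1] at hc; norm_num at hc ⊢; linarith
  have hJ1 : (J3 (3*k+1) : ℝ) = (4*x + (3))/7 := by
    have hc : (7:ℝ) * (J3 (3*k+1) : ℝ) = 2^(3*k+2) + 3 := by exact_mod_cast a2
    rw [pw 2] at hc; norm_num at hc ⊢; linarith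
  have hJ2 : (J3 (3*k+2) : ℝ) = (8*x + (-1))/7 := by
    have hc : (7:ℝ) * (J3 (3*k+2) : ℝ) + 1 = 2^(3*k+3) := by exact_mod_cast a3
    rw [pw 3] at hc; norm_num at hc ⊢; linarith
  have hJ3 : (J3 (3*k+3) : ℝ) = (16*x + (-2))/7 := by
    have hc : (7:ℝ) * (J3 (3*k+3) : ℝ) + 2 = 2^(3*k+4) := by exact_mod_cast a4
    rw [pw 4] at hc; norm_num at hc ⊢; linarith
  have hJ4 : (J3 (3*k+4) : ℝ) = (32*x + (3))/7 := by
    have hc : (7:ℝ) * (J3 (3*k+4) : ℝ) = 2^(3*k+5) + 3 := by exact_mod_cast a5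
    rw [pw 5] at hc; norm_num at hc ⊢; linarith
  have hJ5 : (J3 (3*k+5) : ℝ) = (64*x + (-1))/7 := by
    have hc : (7:ℝ) * (J3 (3*k+5) : ℝ) + 1 = 2^(3*k+6) := by exact_mod_cast a6
    rw [pw 6] at hc; norm_num at hc ⊢; linarith
  have hJ6 : (J3 (3*k+6) : ℝ) = (128*x + (-2))/7 := by
    have hc : (7:ℝ) * (J3 (3*k+6) : ℝ) + 2 = 2^(3*k+7) := by exact_mod_cast a7
    rw [pw 7] at hc; norm_num at hc ⊢; linarith
  have hJ7 : (J3 (3*k+7) : ℝ) = (256*x + (3))/7 := by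
    have hc : (7:ℝ) * (J3 (3*k+7) : ℝ) = 2^(3*k+8) + 3 := by exact_mod_cast a8
    rw [pw 8] at hc; norm_num at hc ⊢; linarith
  have hj0 : (j3 (3*k) : ℝ) = (8*x + (6))/7 := by
    have hc : (7:ℝ) * (j3 (3*k) : ℝ) = 2^(3*k+3) + 6 := by exact_mod_cast b1
    rw [pw 3] at hc; norm_num at hc ⊢; linarith
  have hj1 : (j3 (3*k+1) : ℝ) = (16*x + (-9))/7 := by
    have hc : (7:ℝ) * (j3 (3*k+1) : ℝ) + 9 = 2^(3*k+4) := by exact_mod_cast b2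
    rw [pw 4] at hc; norm_num at hc ⊢; linarith
  have hj2 : (j3 (3*k+2) : ℝ) = (32*x + (3))/7 := by
    have hc : (7:ℝ) * (j3 (3*k+2) : ℝ) = 2^(3*k+5) + 3 := by exact_mod_cast b3
    rw [pw 5] at hc; norm_num at hc ⊢; linarith
  have hj3 : (j3 (3*k+3) : ℝ) = (64*x + (6))/7 := by
    have hc : (7:ℝ) * (j3 (3*k+3) : ℝ) = 2^(3*k+6) + 6 := by exact_mod_cast b4
    rw [pw 6] at hc; norm_num at hc ⊢; linarith
  have hj4 : (j3 (3*k+4) : ℝ) = (128*x + (-9))/7 := by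
    have hc : (7:ℝ) * (j3 (3*k+4) : ℝ) + 9 = 2^(3*k+7) := by exact_mod_cast b5
    rw [pw 7] at hc; norm_num at hc ⊢; linarith
  have hj5 : (j3 (3*k+5) : ℝ) = (256*x + (3))/7 := by
    have hc : (7:ℝ) * (j3 (3*k+5) : ℝ) = 2^(3*k+8) + 3 := by exact_mod_cast b6
    rw [pw 8] at hc; norm_num at hc ⊢; linarith
  have hj6 : (j3 (3*k+6) : ℝ) = (512*x + (6))/7 := by
    have hc : (7:ℝ) * (j3 (3*k+6) : ℝ) = 2^(3*k+9) + 6 := by exact_mod_cast b7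
    rw [pw 9] at hc; norm_num at hc ⊢; linarith
  have hj7 : (j3 (3*k+7) : ℝ) = (1024*x + (-9))/7 := by
    have hc : (7:ℝ) * (j3 (3*k+7) : ℝ) + 9 = 2^(3*k+10) := by exact_mod_cast b8
    rw [pw 10] at hc; norm_num at hc ⊢; linarith

  rw [jO_eq, JO_eq, hJ0, hJ1, hJ2, hJ3, hJ4, hJ5, hJ6, hJ7,
    hj0, hj1, hj2, hj3, hj4, hj5, hj6, hj7, rhs_form]
  rw [omul_mk rfl rfl, osmul_mk 49 rfl]
  refine Prod.ext ?_ ?_ <;> ext <;> simp only [rbig, r4] <;> ring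

open Octonion in
theorem jO_mul_JO (n : ℕ) (h : n % 3 = 0) :
    (49 : ℝ) • (jO n * JO n) =
      ((99 : ℝ) - 520 * 2 ^ n - 349488 * 4 ^ n) • e 0
      + ((2 : ℝ) ^ (2 * n + 6) - 7842 * 2 ^ n + 36) • e 1
      + ((2 : ℝ) ^ (2 * n + 7) + 374 * 2 ^ n - 12) • e 2
      + ((2 : ℝ) ^ (2 * n + 8) - 4936 * 2 ^ n - 24) • e 3
      + ((2 : ℝ) ^ (2 * n + 9) - 3390 * 2 ^ n + 36) • e 4
      + ((2 : ℝ) ^ (2 * n + 10) - 1110 * 2 ^ n - 12) • e 5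
      + ((2 : ℝ) ^ (2 * n + 11) - 5944 * 2 ^ n - 24) • e 6
      + ((2 : ℝ) ^ (2 * n + 12) + 3414 * 2 ^ n + 36) • e 7 := by
  obtain ⟨k, rfl⟩ : ∃ k, n = 3 * k := ⟨n / 3, by omega⟩
  exact jO_mul_JO_aux k

end
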